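/- Let R be a commutative Noetherian local ring with m-adic completion R̂. A finitely generated R-module M is free on the punctured spectrum of R (i.e., M_p is R_p-free for every nonmaximal prime p) if and only if the completion M̂ = M ⊗_R R̂ is free on the punctured spectrum of R̂. -/

import Mathlib

set_option linter.unusedSectionVars false

open IsLocalRing

noncomputable section

/-- A module is free on the punctured spectrum if its localization at every
nonmaximal prime is free. -/
def FreeOnPuncturedSpectrum (A : Type) [CommRing A] (N : Type)
    [AddCommGroup N] [Module A N] : Prop :=
  ∀ q : PrimeSpectrum A, ¬ q.asIdeal.IsMaximal →
    Module.Free (Localization.AtPrime q.asIdeal)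
      (LocalizedModule q.asIdeal.primeCompl N)

open TensorProduct

section Descent

variable {R S : Type} [CommRing R] [CommRing S] [Algebra R S]

lemma FFaux.lTensor_reflects_injective [Module.FaithfullyFlat R S]
    {A B : Type} [AddCommGroup A] [Module R A] [AddCommGroup B] [Module R B]
    (f : A →ₗ[R] B) (h : Function.Injective (LinearMap.lTensor S f)) :
    Function.Injective f := by
  have hsub : Subsingleton (LinearMap.ker f) := by
    have hi : Function.Injective (LinearMap.lTensor S (LinearMap.ker f).subtype) :=
      Module.Flat.lTensor_preserves_injective_linearMap _ (Submodule.injective_subtype _)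
    have hcomp : f ∘ₗ (LinearMap.ker f).subtype = 0 := by
      ext x; exact x.2
    have h0 : ∀ y : S ⊗[R] (LinearMap.ker f), LinearMap.lTensor S (LinearMap.ker f).subtype y = 0 := by
      intro y
      apply h
      rw [← LinearMap.comp_apply, ← LinearMap.lTensor_comp, hcomp]
      simp
    have : Subsingleton (S ⊗[R] (LinearMap.ker f)) :=
      subsingleton_of_forall_eq 0 fun y ↦ hi (by rw [h0 y]; simp)
    exact Module.FaithfullyFlat.lTensor_reflects_triviality R S _
  intro a b hab
  have : a - b ∈ LinearMap.ker f := by simp [LinearMap.mem_ker, map_sub, hab]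
  have := Subsingleton.elim (⟨a - b, this⟩ : LinearMap.ker f) 0
  have := congrArg Subtype.val this
  simpa [sub_eq_zero] using this

lemma FFaux.flat_of_baseChange [Module.FaithfullyFlat R S]
    (N : Type) [AddCommGroup N] [Module R N]
    (h : Module.Flat S (S ⊗[R] N)) : Module.Flat R N := by
  rw [Module.Flat.iff_rTensor_preserves_injective_linearMap]
  intro X Y _ _ _ _ f hf
  apply FFaux.lTensor_reflects_injective (S := S)
  have hbc : Function.Injective (f.baseChange S) := by
    rw [LinearMap.baseChange_eq_ltensor]
    exact Module.Flat.lTensor_preserves_injective_linearMap _ hf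
  have hrt : Function.Injective (LinearMap.rTensor (S ⊗[R] N) (f.baseChange S)) :=
    Module.Flat.rTensor_preserves_injective_linearMap _ hbc
  have key : ∀ z : S ⊗[R] (X ⊗[R] N),
      (AlgebraTensorModule.distribBaseChange R S Y N)
        (LinearMap.lTensor S (LinearMap.rTensor N f) z) =
      LinearMap.rTensor (S ⊗[R] N) (f.baseChange S)
        ((AlgebraTensorModule.distribBaseChange R S X N) z) := by
    intro z
    induction z using TensorProduct.induction_on with
    | zero => simp
    | add a b ha hb => simp [map_add, ha, hb]
    | tmul s xn =>
      induction xn using TensorProduct.induction_on with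
      | zero => simp
      | add a b ha hb =>
        simp only [LinearMap.lTensor_tmul] at ha hb
        simp [tmul_add, map_add, ha, hb]
      | tmul x n =>
        simp [AlgebraTensorModule.distribBaseChange]
  intro a b hab
  apply (AlgebraTensorModule.distribBaseChange R S X N).injective
  apply hrt
  rw [← key, ← key, hab]

end Descent

lemma FFaux.faithfullyFlat_of_local {R S : Type} [CommRing R] [CommRing S] [Algebra R S]
    [IsLocalRing R] [IsLocalRing S] [Module.Flat R S]
    [IsLocalHom (algebraMap R S)] : Module.FaithfullyFlat R S := by
  rw [Module.FaithfullyFlat.iff_flat_and_proper_ideal]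
  refine ⟨inferInstance, fun I hI hIT => ?_⟩
  have hle : I • (⊤ : Submodule R S) ≤ (maximalIdeal S).restrictScalars R := by
    refine Submodule.smul_le.mpr fun r hr x _ => ?_
    have hr' : r ∈ maximalIdeal R := le_maximalIdeal hI hr
    have : algebraMap R S r ∈ maximalIdeal S := by
      intro hu
      exact hr' (IsLocalHom.map_nonunit r hu)
    rw [Algebra.smul_def]
    exact Ideal.mul_mem_right x _ this
  rw [hIT] at hle
  exact (Ideal.ne_top_iff_one _).mp (IsLocalRing.maximalIdeal.isMaximal S).ne_top (hle Submodule.mem_top)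

namespace CompletionAux

variable (R : Type) [CommRing R] [IsLocalRing R] [IsNoetherianRing R]

local notation "mI" => IsLocalRing.maximalIdeal R
local notation "Rc" => AdicCompletion (IsLocalRing.maximalIdeal R) R

/-- The canonical surjection from the completion to the residue field. -/
noncomputable def cPhi : Rc →+* R ⧸ maximalIdeal R :=
  ((Ideal.quotEquivOfEq (pow_one (maximalIdeal R))) : (R ⧸ (maximalIdeal R)^1) →+* R ⧸ maximalIdeal R).comp
    (AdicCompletion.evalₐ (maximalIdeal R) 1).toRingHom

lemma cPhi_mk (x : Rc) (r : R) (hr : x.val 1 = Submodule.Quotient.mk r) :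
    cPhi R x = Ideal.Quotient.mk (maximalIdeal R) r := by
  have h1 : AdicCompletion.evalₐ (maximalIdeal R) 1 x = Ideal.Quotient.mk ((maximalIdeal R)^1) r := by
    simp only [AdicCompletion.evalₐ, AlgHom.comp_apply, AlgHom.ofLinearMap_apply]
    change (Ideal.quotientEquivAlgOfEq R (I := ((maximalIdeal R)^1 • ⊤ : Ideal R)) (J := (maximalIdeal R)^1) _) (x.val 1) = _
    rw [hr]
    have : (Submodule.Quotient.mk r : R ⧸ ((maximalIdeal R)^1 • ⊤ : Ideal R)) =
        Ideal.Quotient.mk ((maximalIdeal R)^1 • ⊤ : Ideal R) r := rfl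
    rw [this]
    exact Ideal.quotientEquivAlgOfEq_mk R _ r
  simp [cPhi, h1, Ideal.quotEquivOfEq_mk]

lemma cPhi_algebraMap (r : R) :
    cPhi R (algebraMap R Rc r) = Ideal.Quotient.mk (maximalIdeal R) r := by
  apply cPhi_mk
  rfl

lemma cPhi_surjective : Function.Surjective (cPhi R) := by
  intro y
  obtain ⟨r, rfl⟩ := Ideal.Quotient.mk_surjective y
  exact ⟨algebraMap R Rc r, cPhi_algebraMap R r⟩

omit [IsNoetherianRing R] in
lemma val_one_eq (x : Rc) {n : ℕ} (hn : 1 ≤ n) (r : R)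
    (hr : x.val n = Submodule.Quotient.mk r) :
    x.val 1 = Submodule.Quotient.mk r := by
  rw [← x.property hn, hr]
  rfl

lemma isUnit_val (x : Rc) (hx : cPhi R x ≠ 0) (n : ℕ) : IsUnit (x.val n) := by
  rcases Nat.eq_zero_or_pos n with hn | hn
  · subst hn
    haveI : Subsingleton (R ⧸ ((maximalIdeal R)^0 • ⊤ : Ideal R)) := by
      rw [Submodule.Quotient.subsingleton_iff]
      simp [Ideal.one_eq_top]
    exact isUnit_of_subsingleton _
  · obtain ⟨r, hr⟩ := Submodule.Quotient.mk_surjective _ (x.val n)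
    have h1 : cPhi R x = Ideal.Quotient.mk (maximalIdeal R) r :=
      cPhi_mk R x r (val_one_eq R x hn r hr.symm)
    have hrm : r ∉ maximalIdeal R := fun h => hx (by
      rw [h1, Ideal.Quotient.eq_zero_iff_mem]; exact h)
    have hur : IsUnit r := by
      by_contra h
      exact hrm (mem_maximalIdeal r |>.mpr h)
    have : x.val n = Ideal.Quotient.mk ((maximalIdeal R)^n • ⊤ : Ideal R) r := hr.symm
    rw [this]
    exact hur.map _

lemma isUnit_of_not_ker (x : Rc) (hx : x ∉ RingHom.ker (cPhi R)) : IsUnit x := by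
  rw [RingHom.mem_ker] at hx
  have hu : ∀ n, IsUnit (x.val n) := isUnit_val R x hx
  have compat : ∀ {m n : ℕ} (hmn : m ≤ n),
      AdicCompletion.transitionMap (maximalIdeal R) R hmn (↑(hu n).unit⁻¹) = ↑(hu m).unit⁻¹ := by
    intro m n hmn
    have htr : ∀ a b : R ⧸ ((maximalIdeal R)^n • ⊤ : Ideal R),
        AdicCompletion.transitionMap (maximalIdeal R) R hmn (a * b) =
        AdicCompletion.transitionMap (maximalIdeal R) R hmn a *
        AdicCompletion.transitionMap (maximalIdeal R) R hmn b :=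
      AdicCompletion.transitionMap_map_mul _ hmn
    have h1 : AdicCompletion.transitionMap (maximalIdeal R) R hmn (↑(hu n).unit⁻¹) * x.val m = 1 := by
      rw [← x.property hmn, ← htr]
      rw [(hu n).val_inv_mul]
      exact AdicCompletion.transitionMap_map_one _ hmn
    have h2 : x.val m * ↑(hu m).unit⁻¹ = 1 := (hu m).mul_val_inv
    calc AdicCompletion.transitionMap (maximalIdeal R) R hmn (↑(hu n).unit⁻¹)
        = AdicCompletion.transitionMap (maximalIdeal R) R hmn (↑(hu n).unit⁻¹) *
            (x.val m * ↑(hu m).unit⁻¹) := by rw [h2, mul_one]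
      _ = (AdicCompletion.transitionMap (maximalIdeal R) R hmn (↑(hu n).unit⁻¹) * x.val m) *
            ↑(hu m).unit⁻¹ := by ring
      _ = ↑(hu m).unit⁻¹ := by rw [h1, one_mul]
  let y : Rc := ⟨fun n => ↑(hu n).unit⁻¹, fun {m n} hmn => compat hmn⟩
  refine IsUnit.of_mul_eq_one (a := x) y ?_
  apply Subtype.ext
  funext n
  show x.val n * ↑(hu n).unit⁻¹ = (1 : Rc).val n
  rw [AdicCompletion.val_one]
  exact (hu n).mul_val_inv

noncomputable instance : IsLocalRing Rc := by
  haveI : Nontrivial Rc := (cPhi R).domain_nontrivial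
  apply IsLocalRing.of_nonunits_add
  intro a b ha hb
  have ha' : a ∈ RingHom.ker (cPhi R) := by
    by_contra h; exact ha (isUnit_of_not_ker R a h)
  have hb' : b ∈ RingHom.ker (cPhi R) := by
    by_contra h; exact hb (isUnit_of_not_ker R b h)
  intro hab
  obtain ⟨u, hu⟩ := hab
  have h1 : (↑u : Rc) ∈ RingHom.ker (cPhi R) := hu ▸ Ideal.add_mem _ ha' hb'
  have : (1 : R ⧸ maximalIdeal R) = 0 := by
    have := congrArg (cPhi R) u.mul_inv
    rw [map_mul, RingHom.mem_ker.mp h1, zero_mul, map_one] at this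
    exact this.symm
  exact one_ne_zero this


lemma ker_ne_top : RingHom.ker (cPhi R) ≠ ⊤ := by
  intro h
  have : cPhi R 1 = 0 := RingHom.mem_ker.mp (h ▸ Submodule.mem_top)
  rw [map_one] at this
  exact one_ne_zero this

lemma maximalIdeal_eq_ker : maximalIdeal Rc = RingHom.ker (cPhi R) := by
  refine le_antisymm ?_ (le_maximalIdeal (ker_ne_top R))
  intro x hx
  by_contra h
  exact hx (isUnit_of_not_ker R x h)

lemma map_of {M N : Type} [AddCommGroup M] [Module R M] [AddCommGroup N] [Module R N]
    (f : M →ₗ[R] N) (x : M) :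
    AdicCompletion.map (maximalIdeal R) f (AdicCompletion.of (maximalIdeal R) M x) =
      AdicCompletion.of (maximalIdeal R) N (f x) := by
  apply Subtype.ext
  funext n
  show (AdicCompletion.map (maximalIdeal R) f (AdicCompletion.of (maximalIdeal R) M x)).val n = _
  rw [AdicCompletion.map_val_apply]
  rfl

lemma of_eq_algebraMap (r : R) :
    AdicCompletion.of (maximalIdeal R) R r = algebraMap R Rc r := rfl

lemma ker_cPhi_eq_map :
    RingHom.ker (cPhi R) = (maximalIdeal R).map (algebraMap R Rc) := by
  refine le_antisymm ?_ (Ideal.map_le_iff_le_comap.mpr fun r hr => ?_)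
  swap
  · rw [Ideal.mem_comap, RingHom.mem_ker, cPhi_algebraMap]
    exact Ideal.Quotient.eq_zero_iff_mem.mpr hr
  intro x hx
  rw [RingHom.mem_ker] at hx
  -- exact sequence m → R → R/m
  have hfg : Function.Exact (maximalIdeal R).subtype (maximalIdeal R).mkQ := LinearMap.exact_subtype_mkQ (maximalIdeal R)
  have hexact := AdicCompletion.map_exact (I := maximalIdeal R)
    (Submodule.injective_subtype (maximalIdeal R)) hfg (Submodule.mkQ_surjective (maximalIdeal R))
  have hker : AdicCompletion.map (maximalIdeal R) (maximalIdeal R).mkQ x = 0 := by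
    apply Subtype.ext
    funext n
    show (AdicCompletion.map (maximalIdeal R) (maximalIdeal R).mkQ x).val n = (0 : AdicCompletion _ _).val n
    rw [AdicCompletion.map_val_apply, AdicCompletion.val_zero]
    obtain ⟨r, hr⟩ := Submodule.Quotient.mk_surjective _ (x.val n)
    rcases Nat.eq_zero_or_pos n with hn | hn
    · subst hn
      haveI : Subsingleton ((R ⧸ (maximalIdeal R)) ⧸ ((maximalIdeal R)^0 • ⊤ : Submodule R (R ⧸ (maximalIdeal R)))) := by
        rw [Submodule.Quotient.subsingleton_iff, pow_zero, Ideal.one_eq_top,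
          Submodule.top_smul]
      exact Subsingleton.elim _ _
    · have h1 : cPhi R x = Ideal.Quotient.mk (maximalIdeal R) r :=
        cPhi_mk R x r (val_one_eq R x hn r hr.symm)
      have hrm : r ∈ maximalIdeal R := by
        rw [hx] at h1
        exact Ideal.Quotient.eq_zero_iff_mem.mp h1.symm
      rw [← hr, LinearMap.reduceModIdeal_apply]
      have : (maximalIdeal R).mkQ r = 0 := (Submodule.Quotient.mk_eq_zero _).mpr hrm
      rw [this]
      simp
  obtain ⟨y, hy⟩ := (hexact x).mp hker
  haveI : Module.Finite R ↥(maximalIdeal R) := Module.Finite.iff_fg.mpr (IsNoetherian.noetherian (maximalIdeal R))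
  obtain ⟨z, hz⟩ := (AdicCompletion.ofTensorProduct_bijective_of_finite_of_isNoetherian
    (maximalIdeal R) ↥(maximalIdeal R)).surjective y
  rw [← hy, ← hz]
  clear hy hz hker hx
  induction z using TensorProduct.induction_on with
  | zero => simp
  | add a b ha hb =>
    rw [map_add, map_add]
    exact Ideal.add_mem _ ha hb
  | tmul a b =>
    have h1 : AdicCompletion.ofTensorProduct (maximalIdeal R) ↥(maximalIdeal R) (a ⊗ₜ b) =
        a • AdicCompletion.of (maximalIdeal R) ↥(maximalIdeal R) b := rfl
    rw [h1, map_smul, map_of]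
    have : (maximalIdeal R).subtype b = (b : R) := rfl
    rw [this, of_eq_algebraMap]
    have hmem : algebraMap R Rc (b : R) ∈ (maximalIdeal R).map (algebraMap R Rc) :=
      Ideal.mem_map_of_mem _ b.2
    rw [smul_eq_mul]
    exact Ideal.mul_mem_left _ a hmem

lemma comap_maximalIdeal_eq :
    (maximalIdeal Rc).comap (algebraMap R Rc) = maximalIdeal R := by
  rw [maximalIdeal_eq_ker]
  ext r
  rw [Ideal.mem_comap, RingHom.mem_ker, cPhi_algebraMap]
  exact Ideal.Quotient.eq_zero_iff_mem

set_option maxHeartbeats 1000000 in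
lemma isMaximal_ker : (RingHom.ker (cPhi R)).IsMaximal := by
  letI : Field (R ⧸ maximalIdeal R) := Ideal.Quotient.field _
  exact RingHom.ker_isMaximal_of_surjective _ (cPhi_surjective R)

lemma isMaximal_map : ((maximalIdeal R).map (algebraMap R Rc)).IsMaximal := by
  rw [← ker_cPhi_eq_map]
  exact isMaximal_ker R

instance : Module.FaithfullyFlat R Rc := by
  rw [Module.FaithfullyFlat.iff_flat_and_proper_ideal]
  refine ⟨AdicCompletion.flat_of_isNoetherian (I := maximalIdeal R), fun I hI hIT => ?_⟩
  have hle : I • (⊤ : Submodule R Rc) ≤ (RingHom.ker (cPhi R)).restrictScalars R := by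
    refine Submodule.smul_le.mpr fun r hr x _ => ?_
    have hr' : r ∈ maximalIdeal R := le_maximalIdeal hI hr
    show r • x ∈ RingHom.ker (cPhi R)
    rw [RingHom.mem_ker, Algebra.smul_def, map_mul, cPhi_algebraMap,
      Ideal.Quotient.eq_zero_iff_mem.mpr hr', zero_mul]
  rw [hIT] at hle
  exact ker_ne_top R (eq_top_iff.mpr fun t _ => hle Submodule.mem_top)

end CompletionAux


set_option maxHeartbeats 2000000 in
set_option synthInstance.maxHeartbeats 400000 in
open TensorProduct in
/-- a finitely generated module `M` over a Noetherian local
ring `R` is free on the punctured spectrum of `R` iff its completion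
`M̂ = R̂ ⊗_R M` is free on the punctured spectrum of `R̂`. -/
theorem freeOnPuncturedSpectrum_iff_completion
    (R : Type) [CommRing R] [IsLocalRing R] [IsNoetherianRing R]
    (M : Type) [AddCommGroup M] [Module R M] [Module.Finite R M] :
    FreeOnPuncturedSpectrum R M ↔
      FreeOnPuncturedSpectrum (AdicCompletion (maximalIdeal R) R)
        (TensorProduct R (AdicCompletion (maximalIdeal R) R) M) := by
  constructor
  · intro h q hq
    have hp : ¬ (PrimeSpectrum.comap
        (algebraMap R (AdicCompletion (maximalIdeal R) R)) q).asIdeal.IsMaximal := by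
      intro hmax
      apply hq
      have hpm : q.asIdeal.comap (algebraMap R (AdicCompletion (maximalIdeal R) R)) =
          maximalIdeal R := IsLocalRing.eq_maximalIdeal hmax
      have h1 : (maximalIdeal R).map (algebraMap R (AdicCompletion (maximalIdeal R) R)) ≤
          q.asIdeal := Ideal.map_le_iff_le_comap.mpr (le_of_eq hpm.symm)
      have h2 : (maximalIdeal R).map (algebraMap R (AdicCompletion (maximalIdeal R) R)) =
          q.asIdeal := (CompletionAux.isMaximal_map R).eq_of_le q.2.ne_top h1
      rw [← h2]
      exact CompletionAux.isMaximal_map R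
    exact Module.comap_freeLocus_le (h _ hp)
  · intro h p hp
    -- Notation
    let Rc := AdicCompletion (maximalIdeal R) R
    let Rp := Localization.AtPrime p.asIdeal
    let F := IsLocalRing.ResidueField Rp
    have hkerF : RingHom.ker (algebraMap R F) = p.asIdeal := by
      ext r
      rw [RingHom.mem_ker, IsScalarTower.algebraMap_apply R Rp F,
        IsLocalRing.ResidueField.algebraMap_eq, IsLocalRing.residue_eq_zero_iff]
      exact IsLocalization.AtPrime.to_map_mem_maximal_iff Rp p.asIdeal r
    -- a maximal ideal of `Rc ⊗ F` gives a prime of `Rc` over `p`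
    obtain ⟨Q, hQ⟩ := Ideal.exists_maximal (TensorProduct R Rc F)
    haveI := hQ.isPrime
    let q : PrimeSpectrum Rc :=
      ⟨Q.comap (algebraMap Rc (TensorProduct R Rc F)), Ideal.IsPrime.comap _⟩
    have hstep : (algebraMap Rc (TensorProduct R Rc F)).comp (algebraMap R Rc) =
        (Algebra.TensorProduct.includeRight.toRingHom :
          F →+* TensorProduct R Rc F).comp (algebraMap R F) := by
      ext r
      show algebraMap R (TensorProduct R Rc F) r = (1 : Rc) ⊗ₜ[R] (algebraMap R F r)
      rw [Algebra.TensorProduct.algebraMap_apply, Algebra.algebraMap_eq_smul_one (A := Rc),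
        Algebra.algebraMap_eq_smul_one (A := F), smul_tmul]
    have hq_comap : q.asIdeal.comap (algebraMap R Rc) = p.asIdeal := by
      show (Q.comap (algebraMap Rc (TensorProduct R Rc F))).comap (algebraMap R Rc) = p.asIdeal
      rw [Ideal.comap_comap, hstep, ← Ideal.comap_comap]
      have hbot : Q.comap (Algebra.TensorProduct.includeRight.toRingHom :
          F →+* TensorProduct R Rc F) = ⊥ := by
        have hpr : (Q.comap (Algebra.TensorProduct.includeRight.toRingHom :
            F →+* TensorProduct R Rc F)).IsPrime := Ideal.IsPrime.comap _
        rcases Ideal.eq_bot_or_top (Q.comap (Algebra.TensorProduct.includeRight.toRingHom :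
            F →+* TensorProduct R Rc F)) with h' | h'
        · exact h'
        · exact absurd h' hpr.ne_top
      rw [hbot, ← RingHom.ker_eq_comap_bot, hkerF]
    have hq : ¬ q.asIdeal.IsMaximal := by
      intro hmax
      have h1 : q.asIdeal = maximalIdeal Rc := IsLocalRing.eq_maximalIdeal hmax
      have h2 : p.asIdeal = maximalIdeal R := by
        rw [← hq_comap, h1, CompletionAux.comap_maximalIdeal_eq]
      exact hp (h2 ▸ IsLocalRing.maximalIdeal.isMaximal R)
    have hfree := h q hq
    let Ap := Localization.AtPrime q.asIdeal
    letI : Algebra Rp Ap :=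
      (Localization.localRingHom p.asIdeal q.asIdeal (algebraMap R Rc) hq_comap.symm).toAlgebra
    haveI : IsScalarTower R Rp Ap := IsScalarTower.of_algebraMap_eq'
      (by rw [RingHom.algebraMap_toAlgebra, Localization.localRingHom, IsLocalization.map_comp,
        ← IsScalarTower.algebraMap_eq R Rc Ap])
    haveI hfree' : Module.Free Ap (Ap ⊗[Rc] (TensorProduct R Rc M)) :=
      (Module.mem_freeLocus_iff_tensor q Ap).mp hfree
    let e : (Ap ⊗[Rc] (TensorProduct R Rc M)) ≃ₗ[Ap] (Ap ⊗[Rp] (Rp ⊗[R] M)) :=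
      (AlgebraTensorModule.cancelBaseChange R Rc Ap Ap M) ≪≫ₗ
        (AlgebraTensorModule.cancelBaseChange R Rp Ap Ap M).symm
    haveI : Module.Free Ap (Ap ⊗[Rp] (Rp ⊗[R] M)) := Module.Free.of_equiv e
    haveI : IsLocalHom (algebraMap Rp Ap) := by
      rw [RingHom.algebraMap_toAlgebra]
      exact Localization.isLocalHom_localRingHom _ _ _ _
    haveI : Module.Flat R Ap := Module.Flat.trans R Rc Ap
    haveI : IsLocalizedModule p.asIdeal.primeCompl (LinearMap.id (M := Ap) (R := R)) :=
      isLocalizedModule_id p.asIdeal.primeCompl Ap Rp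
    haveI : Module.Flat Rp Ap :=
      Module.Flat.of_isLocalizedModule Rp p.asIdeal.primeCompl
        (LinearMap.id (M := Ap) (R := R))
    haveI : Module.FaithfullyFlat Rp Ap := FFaux.faithfullyFlat_of_local (R := Rp) (S := Ap)
    haveI : Module.Flat Rp (Rp ⊗[R] M) :=
      FFaux.flat_of_baseChange (R := Rp) (S := Ap) (Rp ⊗[R] M) inferInstance
    haveI : IsNoetherianRing Rp :=
      IsLocalization.isNoetherianRing p.asIdeal.primeCompl Rp inferInstance
    haveI : Module.FinitePresentation Rp (Rp ⊗[R] M) :=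
      Module.finitePresentation_of_finite Rp (Rp ⊗[R] M)
    haveI : Module.Free Rp (Rp ⊗[R] M) := Module.free_of_flat_of_isLocalRing
    exact (Module.mem_freeLocus_iff_tensor p Rp).mpr ‹Module.Free Rp (Rp ⊗[R] M)›

end
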